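/- Let p, q be relatively prime positive integers and a ∈ (0,1) with pa ∉ ℤ. The optimal covering radius of the periodic billiard trajectory γ(a, p/q) in the unit square equals max(frac(pa), 1 - frac(pa)) / √(p² + q²). -/

import Mathlib

open Set

/-- The folding map on one coordinate. -/
noncomputable def fold (t : ℝ) : ℝ := if Even ⌊t⌋ then Int.fract t else 1 - Int.fract t

/-- A point of the Euclidean plane. -/
noncomputable def pt (x y : ℝ) : EuclideanSpace ℝ (Fin 2) := WithLp.toLp 2 ![x, y]

/-- The orbit of the billiard trajectory γ(a, p/q) in the unit square, obtained by folding
the unfolded ray `y = (p/q)(x - a), y ≥ 0` back into the square. -/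
noncomputable def billiardOrbit (a : ℝ) (p q : ℕ) : Set (EuclideanSpace ℝ (Fin 2)) :=
  {z | ∃ x y : ℝ, 0 ≤ y ∧ y = ((p : ℝ) / q) * (x - a) ∧ z = pt (fold x) (fold y)}

/-- The unit square [0,1]² in the Euclidean plane. -/
def unitSquare : Set (EuclideanSpace ℝ (Fin 2)) :=
  {z | z 0 ∈ Icc (0:ℝ) 1 ∧ z 1 ∈ Icc (0:ℝ) 1}

/-- Optimal covering radius of a set: the infimum of r > 0 whose open r-neighborhood
covers the unit square. -/
noncomputable def rcov (S : Set (EuclideanSpace ℝ (Fin 2))) : ℝ :=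
  sInf {r : ℝ | 0 < r ∧ unitSquare ⊆ Metric.thickening r S}

/-! ### Auxiliary lemmas about `fold` -/

lemma fold_nonneg (t : ℝ) : 0 ≤ fold t := by
  unfold fold
  split
  · exact Int.fract_nonneg t
  · linarith [Int.fract_lt_one t]

lemma fold_le_one (t : ℝ) : fold t ≤ 1 := by
  unfold fold
  split
  · exact (Int.fract_lt_one t).le
  · linarith [Int.fract_nonneg t]

/-- fold t = ±(t - 2m) for some integer m. -/
lemma fold_rep (t : ℝ) : ∃ m : ℤ, fold t = t - 2*m ∨ fold t = 2*m - t := by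
  unfold fold
  rcases Int.even_or_odd ⌊t⌋ with ⟨j, hj⟩ | ⟨j, hj⟩
  · refine ⟨j, Or.inl ?_⟩
    rw [if_pos ⟨j, hj⟩, Int.fract]
    rw [hj]; push_cast; ring
  · refine ⟨j + 1, Or.inr ?_⟩
    rw [if_neg (by simp [hj, Int.even_add_one, parity_simps])]
    rw [Int.fract, hj]; push_cast; ring

lemma fold_eq_abs (t : ℝ) : ∃ m : ℤ, fold t = |t - 2*m| := by
  obtain ⟨m, h | h⟩ := fold_rep t
  · exact ⟨m, by rw [abs_of_nonneg (by linarith [fold_nonneg t]), ← h]⟩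
  · exact ⟨m, by rw [abs_of_nonpos (by linarith [fold_nonneg t])]; linarith⟩

lemma fold_le (t : ℝ) (k : ℤ) : fold t ≤ |t - 2*k| := by
  have h0 := Int.fract_nonneg t
  have h1 := Int.fract_lt_one t
  have hft : t = ⌊t⌋ + Int.fract t := by rw [Int.fract]; ring
  rcases Int.even_or_odd ⌊t⌋ with ⟨j, hj⟩ | ⟨j, hj⟩
  · rw [fold, if_pos ⟨j, hj⟩]
    have hjr : (⌊t⌋ : ℝ) = 2*j := by rw [hj]; push_cast; ring
    rcases le_or_gt k j with h | h
    · have : (k:ℝ) ≤ j := by exact_mod_cast h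
      rcases abs_cases (t - 2*k) with ⟨he, _⟩ | ⟨he, _⟩ <;> linarith
    · have : (j:ℝ) + 1 ≤ k := by exact_mod_cast h
      rcases abs_cases (t - 2*k) with ⟨he, _⟩ | ⟨he, _⟩ <;> linarith
  · rw [fold, if_neg (by simp [hj, Int.even_add_one, parity_simps])]
    have hjr : (⌊t⌋ : ℝ) = 2*j + 1 := by rw [hj]; push_cast; ring
    rcases le_or_gt k j with h | h
    · have : (k:ℝ) ≤ j := by exact_mod_cast h
      rcases abs_cases (t - 2*k) with ⟨he, _⟩ | ⟨he, _⟩ <;> linarith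
    · have : (j:ℝ) + 1 ≤ k := by exact_mod_cast h
      rcases abs_cases (t - 2*k) with ⟨he, _⟩ | ⟨he, _⟩ <;> linarith

lemma fold_lip (s t : ℝ) : |fold s - fold t| ≤ |s - t| := by
  obtain ⟨m, hm⟩ := fold_eq_abs t
  obtain ⟨n, hn⟩ := fold_eq_abs s
  rw [abs_sub_le_iff]
  constructor
  · have h1 : fold s ≤ |s - 2*m| := fold_le s m
    have h2 : |s - 2*m| ≤ |s - t| + |t - 2*m| := by
      calc |s - 2*m| = |(s - t) + (t - 2*m)| := by ring_nf
        _ ≤ |s - t| + |t - 2*m| := abs_add_le _ _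
    linarith [hm ▸ h2, h1, hm.ge]
  · have h1 : fold t ≤ |t - 2*n| := fold_le t n
    have h2 : |t - 2*n| ≤ |s - t| + |s - 2*n| := by
      calc |t - 2*n| = |(-(s - t)) + (s - 2*n)| := by ring_nf
        _ ≤ |(-(s-t))| + |s - 2*n| := abs_add_le _ _
        _ = |s - t| + |s - 2*n| := by rw [abs_neg]
    linarith [hn ▸ h2]

lemma fold_id {t : ℝ} (h0 : 0 ≤ t) (h1 : t ≤ 1) : fold t = t := by
  rcases lt_or_eq_of_le h1 with h | h
  · rw [fold, if_pos, Int.fract_eq_self.2 ⟨h0, h⟩]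
    rw [Int.floor_eq_zero_iff.2 ⟨h0, h⟩]; exact Even.zero
  · subst h
    norm_num [fold, Int.fract]

lemma fold_add_even (t : ℝ) (k : ℤ) (hk : Even k) : fold (t + k) = fold t := by
  unfold fold
  rw [Int.fract_add_intCast, Int.floor_add_intCast]
  have : Even (⌊t⌋ + k) ↔ Even ⌊t⌋ := by simp [Int.even_add, hk]
  rw [if_congr this rfl rfl]

lemma fold_neg (t : ℝ) : fold (-t) = fold t := by
  rcases eq_or_ne (Int.fract t) 0 with h | h
  · obtain ⟨n, hn⟩ : ∃ n : ℤ, t = n := ⟨⌊t⌋, by rw [Int.fract] at h; linarith⟩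
    subst hn
    unfold fold
    rw [show -(n:ℝ) = ((-n : ℤ) : ℝ) by push_cast; ring]
    rw [Int.fract_intCast, Int.fract_intCast, Int.floor_intCast, Int.floor_intCast]
    simp [parity_simps]
  · have hfneg : Int.fract (-t) = 1 - Int.fract t := Int.fract_neg h
    have hceil : ⌈t⌉ = ⌊t⌋ + 1 := by
      have h1 : ⌈t⌉ ≤ ⌊t⌋ + 1 := by
        apply Int.ceil_le.2
        push_cast
        exact (Int.lt_floor_add_one t).le
      have h2 : ⌊t⌋ < ⌈t⌉ := by
        rcases lt_or_eq_of_le (Int.floor_le_ceil t) with h' | h'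
        · exact h'
        · exfalso
          apply h
          have hle : t ≤ (⌊t⌋:ℝ) := by rw [h']; exact Int.le_ceil t
          have : t = (⌊t⌋:ℝ) := le_antisymm hle (Int.floor_le t)
          rw [Int.fract, ← this]; ring
      omega
    have hfl : ⌊-t⌋ = -⌊t⌋ - 1 := by rw [Int.floor_neg, hceil]; ring
    unfold fold
    rw [hfneg, hfl]
    rcases Int.even_or_odd ⌊t⌋ with he | ho
    · rw [if_pos he, if_neg (by simpa [parity_simps] using he)]
      ring
    · rw [if_pos (by simpa [parity_simps] using ho), if_neg (Int.not_even_iff_odd.2 ho)]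

lemma dist_pt_right (z : EuclideanSpace ℝ (Fin 2)) (x y : ℝ) :
    dist z (pt x y) = Real.sqrt ((z 0 - x)^2 + (z 1 - y)^2) := by
  rw [EuclideanSpace.dist_eq]
  simp [pt, Fin.sum_univ_two, Real.dist_eq, sq_abs]

/-- |f + J| ≥ f for even J. -/
lemma L1 (f : ℝ) (h0 : 0 < f) (h1 : f < 1) (J : ℤ) (hJ : Even J) : f ≤ |f + J| := by
  rcases le_or_gt 0 J with h | h
  · have hr : (0:ℝ) ≤ J := by exact_mod_cast h
    rw [abs_of_nonneg (by linarith)]; linarith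
  · have h2 : J ≤ -2 := by
      rcases hJ with ⟨j, hj⟩; omega
    have hr : (J:ℝ) ≤ -2 := by exact_mod_cast h2
    rw [abs_of_nonpos (by linarith)]; linarith

/-- |f - 1 + J| ≥ 1 - f for even J. -/
lemma L2 (f : ℝ) (h0 : 0 < f) (h1 : f < 1) (J : ℤ) (hJ : Even J) : 1 - f ≤ |f - 1 + J| := by
  rcases le_or_gt J 0 with h | h
  · have hr : (J:ℝ) ≤ 0 := by exact_mod_cast h
    rw [abs_of_nonpos (by linarith)]; linarith
  · have h2 : (2:ℤ) ≤ J := by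
      rcases hJ with ⟨j, hj⟩; omega
    have hr : (2:ℝ) ≤ J := by exact_mod_cast h2
    rw [abs_of_nonneg (by linarith)]; linarith

lemma csq (cp cq X u : ℝ) : (cp*X + cq*u)^2 ≤ (cp^2 + cq^2) * (X^2 + u^2) := by
  nlinarith [sq_nonneg (cq*X - cp*u)]

theorem stmt8 (p q : ℕ) (hp : 0 < p) (hq : 0 < q) (hpq : Nat.Coprime p q)
    (a : ℝ) (ha : a ∈ Ioo (0:ℝ) 1) (hns : ¬ ∃ m : ℤ, (p : ℝ) * a = m) :
    rcov (billiardOrbit a p q) =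
      max (Int.fract ((p : ℝ) * a)) (1 - Int.fract ((p : ℝ) * a)) /
        Real.sqrt ((p : ℝ)^2 + (q : ℝ)^2) := by
  obtain ⟨ha0, ha1⟩ := ha
  have hP : (0:ℝ) < p := by exact_mod_cast hp
  have hQ : (0:ℝ) < q := by exact_mod_cast hq
  have hQ1 : (1:ℝ) ≤ q := by exact_mod_cast hq
  set F : ℤ := ⌊(p:ℝ) * a⌋ with hFdef
  set f : ℝ := Int.fract ((p:ℝ) * a) with hfdef
  have hPaF : ((F:ℤ):ℝ) + f = (p:ℝ) * a := Int.floor_add_fract _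
  have hf0 : 0 < f := by
    rcases lt_or_eq_of_le (Int.fract_nonneg ((p:ℝ)*a)) with h | h
    · exact h
    · have h' : f = 0 := h.symm
      exact absurd ⟨F, by rw [← hPaF, h']; ring⟩ hns
  have hf1 : f < 1 := Int.fract_lt_one _
  set M : ℝ := max f (1 - f) with hMdef
  have hMf : f ≤ M := le_max_left _ _
  have hM1f : 1 - f ≤ M := le_max_right _ _
  have hM0 : 0 < M := lt_of_lt_of_le hf0 hMf
  set S2 : ℝ := (p:ℝ)^2 + (q:ℝ)^2 with hS2def
  have hS2 : 0 < S2 := by positivity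
  set s : ℝ := Real.sqrt S2 with hsdef
  have hs0 : 0 < s := Real.sqrt_pos.2 hS2
  have hss : s^2 = S2 := Real.sq_sqrt hS2.le
  have hR0 : 0 < M / s := div_pos hM0 hs0
  -- the bad value vi and the key estimate
  obtain ⟨vi, hvi01, hbadJ⟩ :
      ∃ vi : ℤ, (vi = 0 ∨ vi = 1) ∧ ∀ J : ℤ, (Even (F + vi) ↔ Even J) → M ≤ |f + J| := by
    rcases Int.even_or_odd F with hF | hF <;> rcases le_total (1 - f) f with hle | hle
    · refine ⟨0, Or.inl rfl, fun J hJ => ?_⟩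
      have hJe : Even J := hJ.1 (by simpa using hF)
      have hMeq : M = f := max_eq_left hle
      rw [hMeq]
      exact L1 f hf0 hf1 J hJe
    · refine ⟨1, Or.inr rfl, fun J hJ => ?_⟩
      have hJo : ¬ Even J := fun hc => (by simpa [parity_simps] using hJ.2 hc : ¬ Even F) hF
      have hJe : Even (J + 1) := by
        rcases Int.even_or_odd J with h | h
        · exact absurd h hJo
        · simpa [parity_simps] using h
      have hMeq : M = 1 - f := max_eq_right hle
      rw [hMeq]
      calc 1 - f ≤ |f - 1 + ((J + 1 : ℤ):ℝ)| := L2 f hf0 hf1 (J+1) hJe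
        _ = |f + J| := by congr 1; push_cast; ring
    · refine ⟨1, Or.inr rfl, fun J hJ => ?_⟩
      have hJe : Even J := hJ.1 (by simpa [parity_simps] using hF)
      have hMeq : M = f := max_eq_left hle
      rw [hMeq]
      exact L1 f hf0 hf1 J hJe
    · refine ⟨0, Or.inl rfl, fun J hJ => ?_⟩
      have hJo : ¬ Even J := fun hc =>
        (Int.not_even_iff_odd.2 hF) (by simpa using hJ.2 hc)
      have hJe : Even (J + 1) := by
        rcases Int.even_or_odd J with h | h
        · exact absurd h hJo
        · simpa [parity_simps] using h
      have hMeq : M = 1 - f := max_eq_right hle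
      rw [hMeq]
      calc 1 - f ≤ |f - 1 + ((J + 1 : ℤ):ℝ)| := L2 f hf0 hf1 (J+1) hJe
        _ = |f + J| := by congr 1; push_cast; ring
  have key : ∀ σ : ℝ, (σ = 1 ∨ σ = -1) → ∀ k : ℤ,
      M ≤ |(vi:ℝ) + σ * ((p:ℝ) * a) + 2*k| := by
    intro σ hσ k
    rcases hσ with rfl | rfl
    · have h := hbadJ (vi + F + 2*k) (by rw [Int.even_iff, Int.even_iff]; omega)
      calc M ≤ |f + ((vi + F + 2*k : ℤ):ℝ)| := h
        _ = |(vi:ℝ) + 1 * ((p:ℝ) * a) + 2*k| := by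
            rw [show (vi:ℝ) + 1 * ((p:ℝ) * a) + 2*(k:ℝ)
                = f + ((vi + F + 2*k : ℤ):ℝ) from by push_cast; linear_combination - hPaF]
    · have h := hbadJ (F - 2*k - vi) (by rw [Int.even_iff, Int.even_iff]; omega)
      calc M ≤ |f + ((F - 2*k - vi : ℤ):ℝ)| := h
        _ = |(vi:ℝ) + (-1) * ((p:ℝ) * a) + 2*k| := by
            rw [show (vi:ℝ) + (-1) * ((p:ℝ) * a) + 2*(k:ℝ)
                = -(f + ((F - 2*k - vi : ℤ):ℝ)) from by push_cast; linear_combination hPaF,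
              abs_neg]
  -- description of the set of covering radii
  have hset : {r : ℝ | 0 < r ∧ unitSquare ⊆ Metric.thickening r (billiardOrbit a p q)}
      = Ioi (M / s) := by
    ext r
    simp only [mem_setOf_eq, mem_Ioi]
    constructor
    · -- lower bound
      rintro ⟨hr, hcov⟩
      set zb : EuclideanSpace ℝ (Fin 2) := pt 0 ((vi:ℝ)/q) with hzbdef
      have hzb0 : zb 0 = 0 := by simp [hzbdef, pt]
      have hzb1 : zb 1 = (vi:ℝ)/q := by simp [hzbdef, pt]
      have hvi0 : (0:ℝ) ≤ vi := by rcases hvi01 with h | h <;> simp [h]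
      have hvi1 : (vi:ℝ) ≤ 1 := by rcases hvi01 with h | h <;> simp [h]
      have hzbU : zb ∈ unitSquare := by
        constructor
        · rw [hzb0]; exact ⟨le_refl 0, zero_le_one⟩
        · rw [hzb1]
          exact ⟨div_nonneg hvi0 hQ.le, by rw [div_le_one hQ]; linarith⟩
      obtain ⟨w, hw, hdist⟩ := Metric.mem_thickening_iff.1 (hcov hzbU)
      obtain ⟨x, y, hy0, hxy, rfl⟩ := hw
      have hQy : (q:ℝ) * y = (p:ℝ) * (x - a) := by
        rw [hxy]; field_simp
      refine lt_of_le_of_lt ?_ hdist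
      rw [dist_pt_right, hzb0, hzb1]
      obtain ⟨m₀, hx'⟩ := fold_rep x
      obtain ⟨m₁, hy'⟩ := fold_rep y
      set X : ℝ := fold x with hXdef
      set Y : ℝ := fold y with hYdef
      set u : ℝ := Y - (vi:ℝ)/q with hudef
      have harg : (0 - X)^2 + ((vi:ℝ)/q - Y)^2 = X^2 + u^2 := by rw [hudef]; ring
      rw [harg]
      have hMN : ∃ cp : ℝ, (cp = p ∨ cp = -p) ∧ M ≤ |cp*X + ((q:ℝ)*Y - vi)| := by
        rcases hx' with hx' | hx' <;> rcases hy' with hy' | hy'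
        · refine ⟨-(p:ℝ), Or.inr (by ring), ?_⟩
          rw [show (-(p:ℝ))*X + ((q:ℝ)*Y - vi)
              = -((vi:ℝ) + 1 * ((p:ℝ)*a) + 2*(((q:ℤ)*m₁ - (p:ℤ)*m₀ : ℤ):ℝ)) from by
            rw [hx', hy']; push_cast; linear_combination hQy, abs_neg]
          exact key 1 (Or.inl rfl) _
        · refine ⟨(p:ℝ), Or.inl rfl, ?_⟩
          rw [show ((p:ℝ))*X + ((q:ℝ)*Y - vi)
              = -((vi:ℝ) + (-1) * ((p:ℝ)*a) + 2*(((p:ℤ)*m₀ - (q:ℤ)*m₁ : ℤ):ℝ)) from by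
            rw [hx', hy']; push_cast; linear_combination - hQy, abs_neg]
          exact key (-1) (Or.inr rfl) _
        · refine ⟨(p:ℝ), Or.inl rfl, ?_⟩
          rw [show ((p:ℝ))*X + ((q:ℝ)*Y - vi)
              = -((vi:ℝ) + 1 * ((p:ℝ)*a) + 2*(((q:ℤ)*m₁ - (p:ℤ)*m₀ : ℤ):ℝ)) from by
            rw [hx', hy']; push_cast; linear_combination hQy, abs_neg]
          exact key 1 (Or.inl rfl) _
        · refine ⟨-(p:ℝ), Or.inr (by ring), ?_⟩
          rw [show (-(p:ℝ))*X + ((q:ℝ)*Y - vi)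
              = -((vi:ℝ) + (-1) * ((p:ℝ)*a) + 2*(((p:ℤ)*m₀ - (q:ℤ)*m₁ : ℤ):ℝ)) from by
            rw [hx', hy']; push_cast; linear_combination - hQy, abs_neg]
          exact key (-1) (Or.inr rfl) _
      obtain ⟨cp, hcp, hN⟩ := hMN
      have hqu : cp*X + (q:ℝ)*u = cp*X + ((q:ℝ)*Y - vi) := by
        rw [hudef]; field_simp
      have hN' : M ≤ |cp*X + (q:ℝ)*u| := by rw [hqu]; exact hN
      have hcp2 : cp^2 = (p:ℝ)^2 := by rcases hcp with h | h <;> rw [h] <;> ring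
      have hM2 : M^2 ≤ S2 * (X^2 + u^2) := by
        have h1 : M^2 ≤ (cp*X + (q:ℝ)*u)^2 := by
          rw [← sq_abs (cp*X + (q:ℝ)*u)]
          exact pow_le_pow_left₀ hM0.le hN' 2
        have h2 := csq cp (q:ℝ) X u
        rw [hcp2] at h2
        calc M^2 ≤ (cp*X + (q:ℝ)*u)^2 := h1
          _ ≤ ((p:ℝ)^2 + (q:ℝ)^2) * (X^2 + u^2) := h2
          _ = S2 * (X^2 + u^2) := by rw [hS2def]
      have hfinal : (M/s)^2 ≤ X^2 + u^2 := by
        rw [div_pow, hss, div_le_iff₀ hS2]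
        calc M^2 ≤ S2 * (X^2 + u^2) := hM2
          _ = (X^2 + u^2) * S2 := mul_comm _ _
      calc M / s = Real.sqrt ((M/s)^2) := (Real.sqrt_sq hR0.le).symm
        _ ≤ Real.sqrt (X^2 + u^2) := Real.sqrt_le_sqrt hfinal
    · -- upper bound
      intro hr
      refine ⟨lt_trans hR0 hr, fun z hz => ?_⟩
      obtain ⟨⟨hz00, hz01⟩, hz10, hz11⟩ := hz
      set A : ℝ := (q:ℝ)*(z 1) - (p:ℝ)*(z 0) with hAdef
      obtain ⟨ε, k, hε, hδM⟩ :
          ∃ (ε : ℝ) (k : ℤ), (ε = 1 ∨ ε = -1) ∧ |ε*A + (p:ℝ)*a + 2*k| ≤ M := by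
        set rb : ℤ := round ((A + (p:ℝ)*a)/2) with hrbdef
        set rc : ℤ := round ((-A + (p:ℝ)*a)/2) with hrcdef
        set b : ℝ := A + (p:ℝ)*a - 2*rb with hbdef
        set c : ℝ := -A + (p:ℝ)*a - 2*rc with hcdef
        have hb1 : |b| ≤ 1 := by
          have h := abs_sub_round ((A + (p:ℝ)*a)/2)
          rw [show b = 2*((A + (p:ℝ)*a)/2 - rb) from by rw [hbdef]; ring, abs_mul, abs_two]
          linarith
        have hc1 : |c| ≤ 1 := by
          have h := abs_sub_round ((-A + (p:ℝ)*a)/2)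
          rw [show c = 2*((-A + (p:ℝ)*a)/2 - rc) from by rw [hcdef]; ring, abs_mul, abs_two]
          linarith
        by_cases hbM : |b| ≤ M
        · refine ⟨1, -rb, Or.inl rfl, ?_⟩
          rw [show (1:ℝ)*A + (p:ℝ)*a + 2*((-rb : ℤ):ℝ) = b from by rw [hbdef]; push_cast; ring]
          exact hbM
        · refine ⟨-1, -rc, Or.inr rfl, ?_⟩
          rw [show (-1:ℝ)*A + (p:ℝ)*a + 2*((-rc : ℤ):ℝ) = c from by rw [hcdef]; push_cast; ring]
          push_neg at hbM
          by_contra hcM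
          push_neg at hcM
          have hKr : b + c = 2*f + 2*((F - rb - rc : ℤ):ℝ) := by
            rw [hbdef, hcdef]; push_cast; linear_combination - 2*hPaF
          obtain ⟨hbl, hbu⟩ := abs_le.1 hb1
          obtain ⟨hcl, hcu⟩ := abs_le.1 hc1
          have hK0 : (F - rb - rc : ℤ) = 0 ∨ (F - rb - rc : ℤ) = -1 := by
            have h1 : ((F - rb - rc : ℤ):ℝ) < 1 := by linarith
            have h2 : (-2:ℝ) < ((F - rb - rc : ℤ):ℝ) := by linarith
            have h1' : (F - rb - rc : ℤ) < 1 := by exact_mod_cast h1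
            have h2' : (-2:ℤ) < (F - rb - rc : ℤ) := by exact_mod_cast h2
            omega
          rcases hK0 with hK | hK <;>
            rw [hK] at hKr <;> push_cast at hKr <;>
            rcases abs_cases b with ⟨hbe, _⟩ | ⟨hbe, _⟩ <;>
            rcases abs_cases c with ⟨hce, _⟩ | ⟨hce, _⟩ <;>
            linarith
      -- Bezout
      have hcop : IsCoprime (p:ℤ) (q:ℤ) := by
        rw [Int.isCoprime_iff_gcd_eq_one, Int.gcd_natCast_natCast]
        exact hpq
      obtain ⟨uu, vv, huv⟩ := hcop
      have hmn : (q:ℤ)*(k*vv) - (p:ℤ)*(-(k*uu)) = k := by linear_combination k*huv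
      set m : ℤ := -(k*uu) with hmdef
      set n : ℤ := k*vv with hndef
      have hmnR : (q:ℝ)*(n:ℝ) - (p:ℝ)*(m:ℝ) = (k:ℝ) := by exact_mod_cast hmn
      set c0 : ℝ := (ε*(z 0) + 2*(m:ℝ) - a)*q + (ε*(z 1) + 2*(n:ℝ))*p with hc0def
      set j : ℤ := max 0 ⌈-c0/(2*S2)⌉ with hjdef
      have hjge : -c0/(2*S2) ≤ (j:ℝ) := by
        refine le_trans (Int.le_ceil _) ?_
        exact_mod_cast le_max_right 0 ⌈-c0/(2*S2)⌉
      set w0 : ℝ := ε*(z 0) + 2*((m:ℝ) + (j:ℝ)*q) with hw0def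
      set w1 : ℝ := ε*(z 1) + 2*((n:ℝ) + (j:ℝ)*p) with hw1def
      set t : ℝ := ((w0 - a)*q + w1*p)/S2 with htdef
      have htS : S2*t = (w0 - a)*q + w1*p := by
        rw [htdef]; field_simp
      have ht0 : 0 ≤ t := by
        rw [htdef]
        apply div_nonneg _ hS2.le
        have hnum : (w0 - a)*q + w1*p = c0 + 2*(j:ℝ)*S2 := by
          rw [hw0def, hw1def, hc0def, hS2def]; ring
        rw [hnum]
        have h2S : (0:ℝ) < 2*S2 := by linarith
        rw [div_le_iff₀ h2S] at hjge
        linarith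
      have hy0 : 0 ≤ (p:ℝ)*t := mul_nonneg hP.le ht0
      have hyx : (p:ℝ)*t = ((p:ℝ)/q)*((a + (q:ℝ)*t) - a) := by
        rw [add_sub_cancel_left]
        field_simp
      have hmem : pt (fold (a + (q:ℝ)*t)) (fold ((p:ℝ)*t)) ∈ billiardOrbit a p q :=
        ⟨a + (q:ℝ)*t, (p:ℝ)*t, hy0, hyx, rfl⟩
      set δ : ℝ := ε*A + (p:ℝ)*a + 2*(k:ℝ) with hδdef
      have hdx' : S2*((a + (q:ℝ)*t) - w0) = (p:ℝ)*δ := by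
        rw [hδdef, hAdef]
        have hw : (q:ℝ)*w1 - (p:ℝ)*w0 = ε*((q:ℝ)*(z 1) - (p:ℝ)*(z 0)) + 2*(k:ℝ) := by
          rw [hw0def, hw1def]; linear_combination 2*hmnR
        linear_combination (q:ℝ)*htS + (p:ℝ)*hw
      have hdy' : S2*(((p:ℝ)*t) - w1) = -(q:ℝ)*δ := by
        rw [hδdef, hAdef]
        have hw : (q:ℝ)*w1 - (p:ℝ)*w0 = ε*((q:ℝ)*(z 1) - (p:ℝ)*(z 0)) + 2*(k:ℝ) := by
          rw [hw0def, hw1def]; linear_combination 2*hmnR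
        linear_combination (p:ℝ)*htS - (q:ℝ)*hw
      have hdx : (a + (q:ℝ)*t) - w0 = (p:ℝ)*δ/S2 := by
        rw [eq_div_iff hS2.ne']; linear_combination hdx'
      have hdy : ((p:ℝ)*t) - w1 = -(q:ℝ)*δ/S2 := by
        rw [eq_div_iff hS2.ne']; linear_combination hdy'
      have hw0f : fold w0 = z 0 := by
        rw [show w0 = ε*(z 0) + ((2*(m + j*q) : ℤ):ℝ) from by rw [hw0def]; push_cast; ring]
        rw [fold_add_even _ _ ⟨m + j*q, by ring⟩]
        rcases hε with rfl | rfl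
        · rw [one_mul]; exact fold_id hz00 hz01
        · rw [show (-1:ℝ)*(z 0) = -(z 0) from by ring, fold_neg]; exact fold_id hz00 hz01
      have hw1f : fold w1 = z 1 := by
        rw [show w1 = ε*(z 1) + ((2*(n + j*p) : ℤ):ℝ) from by rw [hw1def]; push_cast; ring]
        rw [fold_add_even _ _ ⟨n + j*p, by ring⟩]
        rcases hε with rfl | rfl
        · rw [one_mul]; exact fold_id hz10 hz11
        · rw [show (-1:ℝ)*(z 1) = -(z 1) from by ring, fold_neg]; exact fold_id hz10 hz11
      refine Metric.mem_thickening_iff.2 ⟨pt (fold (a + (q:ℝ)*t)) (fold ((p:ℝ)*t)), hmem, ?_⟩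
      have hb0 : |z 0 - fold (a + (q:ℝ)*t)| ≤ |(a + (q:ℝ)*t) - w0| := by
        calc |z 0 - fold (a + (q:ℝ)*t)| = |fold w0 - fold (a + (q:ℝ)*t)| := by rw [hw0f]
          _ ≤ |w0 - (a + (q:ℝ)*t)| := fold_lip _ _
          _ = |(a + (q:ℝ)*t) - w0| := abs_sub_comm _ _
      have hb1 : |z 1 - fold ((p:ℝ)*t)| ≤ |((p:ℝ)*t) - w1| := by
        calc |z 1 - fold ((p:ℝ)*t)| = |fold w1 - fold ((p:ℝ)*t)| := by rw [hw1f]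
          _ ≤ |w1 - ((p:ℝ)*t)| := fold_lip _ _
          _ = |((p:ℝ)*t) - w1| := abs_sub_comm _ _
      have hdistle : dist z (pt (fold (a + (q:ℝ)*t)) (fold ((p:ℝ)*t))) ≤ M/s := by
        rw [dist_pt_right]
        have e0 : (z 0 - fold (a + (q:ℝ)*t))^2 ≤ ((a + (q:ℝ)*t) - w0)^2 := by
          rw [← sq_abs (z 0 - fold (a + (q:ℝ)*t)), ← sq_abs ((a + (q:ℝ)*t) - w0)]
          exact pow_le_pow_left₀ (abs_nonneg _) hb0 2
        have e1 : (z 1 - fold ((p:ℝ)*t))^2 ≤ (((p:ℝ)*t) - w1)^2 := by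
          rw [← sq_abs (z 1 - fold ((p:ℝ)*t)), ← sq_abs (((p:ℝ)*t) - w1)]
          exact pow_le_pow_left₀ (abs_nonneg _) hb1 2
        have hne : (p:ℝ)^2 + (q:ℝ)^2 ≠ 0 := by positivity
        have hd2 : ((a + (q:ℝ)*t) - w0)^2 + (((p:ℝ)*t) - w1)^2 = δ^2/S2 := by
          rw [hdx, hdy, hS2def]
          field_simp
        have hδ2 : δ^2 ≤ M^2 := by
          rw [← sq_abs δ]
          exact pow_le_pow_left₀ (abs_nonneg δ) hδM 2
        have hsum : (z 0 - fold (a + (q:ℝ)*t))^2 + (z 1 - fold ((p:ℝ)*t))^2 ≤ M^2/S2 := by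
          calc (z 0 - fold (a + (q:ℝ)*t))^2 + (z 1 - fold ((p:ℝ)*t))^2
              ≤ ((a + (q:ℝ)*t) - w0)^2 + (((p:ℝ)*t) - w1)^2 := by linarith
            _ = δ^2/S2 := hd2
            _ ≤ M^2/S2 := (div_le_div_iff_of_pos_right hS2).2 hδ2
        calc Real.sqrt ((z 0 - fold (a + (q:ℝ)*t))^2 + (z 1 - fold ((p:ℝ)*t))^2)
            ≤ Real.sqrt (M^2/S2) := Real.sqrt_le_sqrt hsum
          _ = M/s := by
              rw [show M^2/S2 = (M/s)^2 from by rw [div_pow, hss], Real.sqrt_sq hR0.le]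
      exact lt_of_le_of_lt hdistle hr
  show sInf {r : ℝ | 0 < r ∧ unitSquare ⊆ Metric.thickening r (billiardOrbit a p q)} = M / s
  rw [hset]
  exact csInf_Ioi
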